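/- Let a, b > 0 be real numbers and let X and Y be independent random variables on a probability space such that X has the Poisson distribution with mean a and Y has the Poisson distribution with mean b. Then the variance of (X − Y)² − X − Y satisfies Var[(X − Y)² − X − Y] ≤ 4(a − b)²(a + b) + 8(a + b)². -/

import Mathlib

open MeasureTheory ProbabilityTheory

noncomputable def pois (a : ℝ) (k : ℕ) : ℝ := Real.exp (-a) * a ^ k / (Nat.factorial k)

lemma pois_def : ∀ (a : ℝ) (k : ℕ), pois a k = Real.exp (-a) * a ^ k / (Nat.factorial k) :=
  fun _ _ => rfl

lemma pois_nonneg {a : ℝ} (ha : 0 ≤ a) (k : ℕ) : 0 ≤ pois a k := by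
  unfold pois; positivity

lemma hasSum_exp_real (a : ℝ) : HasSum (fun j : ℕ => a ^ j / j.factorial) (Real.exp a) := by
  rw [Real.exp_eq_exp_ℝ]; exact NormedSpace.expSeries_div_hasSum_exp a

lemma descProd : ∀ (m j : ℕ), (∏ i ∈ Finset.range m, (((j + m : ℕ) : ℝ) - (i : ℕ))) * (j.factorial : ℝ)
    = ((j + m).factorial : ℝ)
  | 0, j => by simp
  | (m+1), j => by
    have ih := descProd m (j + 1)
    rw [Finset.prod_range_succ]
    have h1 : ∀ i : ℕ, ((j + (m+1) : ℕ) : ℝ) - i = ((j + 1 + m : ℕ) : ℝ) - i := by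
      intro i; push_cast; ring
    have h2 : (∏ i ∈ Finset.range m, (((j + (m+1) : ℕ) : ℝ) - (i : ℕ)))
        = ∏ i ∈ Finset.range m, (((j + 1 + m : ℕ) : ℝ) - (i : ℕ)) :=
      Finset.prod_congr rfl (fun i _ => h1 i)
    have h3 : ((j + (m+1) : ℕ) : ℝ) - (m : ℕ) = ((j : ℝ) + 1) := by push_cast; ring
    have h4 : (j + (m+1)) = (j + 1 + m) := by ring
    rw [h2, h3, h4]
    calc (∏ i ∈ Finset.range m, (((j + 1 + m : ℕ) : ℝ) - (i : ℕ))) * ((j:ℝ) + 1) * (j.factorial : ℝ)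
        = (∏ i ∈ Finset.range m, (((j + 1 + m : ℕ) : ℝ) - (i : ℕ))) * (((j+1).factorial : ℝ)) := by
          rw [Nat.factorial_succ]; push_cast; ring
      _ = ((j + 1 + m).factorial : ℝ) := ih

lemma hasSum_desc (a : ℝ) (m : ℕ) :
    HasSum (fun k : ℕ => (∏ i ∈ Finset.range m, ((k : ℝ) - (i : ℕ))) * pois a k) (a ^ m) := by
  have hinj : Function.Injective (fun j : ℕ => j + m) := fun x y h => by simpa using h
  have hzero : ∀ x ∉ Set.range (fun j : ℕ => j + m),
      (∏ i ∈ Finset.range m, ((x : ℝ) - (i : ℕ))) * pois a x = 0 := by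
    intro x hx
    have hxm : x < m := by
      by_contra h
      exact hx ⟨x - m, by simp; omega⟩
    have : (∏ i ∈ Finset.range m, ((x : ℝ) - (i : ℕ))) = 0 :=
      Finset.prod_eq_zero (Finset.mem_range.2 hxm) (by simp)
    rw [this, zero_mul]
  rw [← hinj.hasSum_iff hzero]
  have key : ∀ j : ℕ, (∏ i ∈ Finset.range m, (((j + m : ℕ) : ℝ) - (i : ℕ))) * pois a (j + m)
      = (Real.exp (-a) * a ^ m) * (a ^ j / j.factorial) := by
    intro j
    have hfac : (j.factorial : ℝ) ≠ 0 := Nat.cast_ne_zero.2 j.factorial_ne_zero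
    have hfac2 : (((j+m).factorial : ℕ) : ℝ) ≠ 0 := Nat.cast_ne_zero.2 (j+m).factorial_ne_zero
    have hd := descProd m j
    unfold pois
    field_simp
    rw [← hd]
    push_cast
    ring
  have : HasSum (fun j : ℕ => (Real.exp (-a) * a ^ m) * (a ^ j / j.factorial))
      ((Real.exp (-a) * a ^ m) * Real.exp a) := (hasSum_exp_real a).mul_left _
  have hv : (Real.exp (-a) * a ^ m) * Real.exp a = a ^ m := by
    rw [Real.exp_neg]; field_simp
  rw [hv] at this
  show HasSum (fun j : ℕ => (∏ i ∈ Finset.range m, (((j + m : ℕ) : ℝ) - (i : ℕ))) * pois a (j + m)) (a ^ m)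
  rw [funext key]
  exact this

noncomputable def pmom (a : ℝ) : ℕ → ℝ
  | 0 => 1
  | 1 => a
  | 2 => a^2 + a
  | 3 => a^3 + 3*a^2 + a
  | 4 => a^4 + 6*a^3 + 7*a^2 + a
  | _ => 0

lemma hasSum_pow_pois (a : ℝ) (m : ℕ) (hm : m ≤ 4) :
    HasSum (fun k : ℕ => (k : ℝ) ^ m * pois a k) (pmom a m) := by
  interval_cases m
  · have h := hasSum_desc a 0
    simpa [pmom] using h
  · have h := hasSum_desc a 1
    have : (fun k : ℕ => (k : ℝ) ^ 1 * pois a k)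
        = fun k : ℕ => (∏ i ∈ Finset.range 1, ((k : ℝ) - (i : ℕ))) * pois a k := by
      funext k; simp [Finset.prod_range_succ]
    rw [this]; simpa [pmom] using h
  · have h := (hasSum_desc a 2).add (hasSum_desc a 1)
    have : (fun k : ℕ => (k : ℝ) ^ 2 * pois a k)
        = fun k : ℕ => (∏ i ∈ Finset.range 2, ((k : ℝ) - (i : ℕ))) * pois a k
          + (∏ i ∈ Finset.range 1, ((k : ℝ) - (i : ℕ))) * pois a k := by
      funext k; simp only [Finset.prod_range_succ, Finset.prod_range_zero]; ring
    rw [this]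
    have hv : pmom a 2 = a ^ 2 + a ^ 1 := by simp [pmom]
    rw [hv]; exact h
  · have h := ((hasSum_desc a 3).add ((hasSum_desc a 2).mul_left 3)).add (hasSum_desc a 1)
    have : (fun k : ℕ => (k : ℝ) ^ 3 * pois a k)
        = fun k : ℕ => ((∏ i ∈ Finset.range 3, ((k : ℝ) - (i : ℕ))) * pois a k
          + 3 * ((∏ i ∈ Finset.range 2, ((k : ℝ) - (i : ℕ))) * pois a k))
          + (∏ i ∈ Finset.range 1, ((k : ℝ) - (i : ℕ))) * pois a k := by
      funext k; simp only [Finset.prod_range_succ, Finset.prod_range_zero]; ring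
    rw [this]
    have hv : pmom a 3 = (a ^ 3 + 3 * a ^ 2) + a ^ 1 := by simp [pmom]
    rw [hv]; exact h
  · have h := (((hasSum_desc a 4).add ((hasSum_desc a 3).mul_left 6)).add
      ((hasSum_desc a 2).mul_left 7)).add (hasSum_desc a 1)
    have : (fun k : ℕ => (k : ℝ) ^ 4 * pois a k)
        = fun k : ℕ => (((∏ i ∈ Finset.range 4, ((k : ℝ) - (i : ℕ))) * pois a k
          + 6 * ((∏ i ∈ Finset.range 3, ((k : ℝ) - (i : ℕ))) * pois a k))
          + 7 * ((∏ i ∈ Finset.range 2, ((k : ℝ) - (i : ℕ))) * pois a k))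
          + (∏ i ∈ Finset.range 1, ((k : ℝ) - (i : ℕ))) * pois a k := by
      funext k; simp only [Finset.prod_range_succ, Finset.prod_range_zero]; ring
    rw [this]
    have hv : pmom a 4 = ((a ^ 4 + 6 * a ^ 3) + 7 * a ^ 2) + a ^ 1 := by simp [pmom]
    rw [hv]; exact h

lemma integral_comp_pois {Ω : Type*} [MeasurableSpace Ω] (μ : Measure Ω) [IsProbabilityMeasure μ]
    (X : Ω → ℕ) (hX : Measurable X) (a : ℝ) (ha : 0 ≤ a)
    (hXd : ∀ k : ℕ, μ {ω | X ω = k} = ENNReal.ofReal (pois a k))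
    (f : ℕ → ℝ) (hf : ∀ k, 0 ≤ f k) (s : ℝ)
    (hs : HasSum (fun k => f k * pois a k) s) :
    Integrable (fun ω => f (X ω)) μ ∧ ∫ ω, f (X ω) ∂μ = s := by
  have hν : ∀ k : ℕ, μ.map X {k} = ENNReal.ofReal (pois a k) := by
    intro k
    rw [Measure.map_apply hX (measurableSet_singleton k)]
    have hpre : X ⁻¹' {k} = {ω | X ω = k} := rfl
    rw [hpre, hXd]
  have hmf : Measurable f := measurable_of_countable f
  have hintf : Integrable f (μ.map X) := by
    refine ⟨hmf.aestronglyMeasurable, ?_⟩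
    show (∫⁻ k, (‖f k‖₊ : ENNReal) ∂(μ.map X)) < ⊤
    rw [lintegral_countable']
    have hterm : ∀ k : ℕ, (‖f k‖₊ : ENNReal) * (μ.map X) {k} = ENNReal.ofReal (f k * pois a k) := by
      intro k
      rw [hν k, ← enorm_eq_nnnorm, Real.enorm_eq_ofReal (hf k), ← ENNReal.ofReal_mul (hf k)]
    rw [tsum_congr hterm,
      ← ENNReal.ofReal_tsum_of_nonneg (fun k => mul_nonneg (hf k) (pois_nonneg ha k)) hs.summable]
    exact ENNReal.ofReal_lt_top
  constructor
  · exact (integrable_map_measure hmf.aestronglyMeasurable hX.aemeasurable).mp hintf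
  · rw [← integral_map hX.aemeasurable hmf.aestronglyMeasurable, integral_countable' hintf]
    have hterm : ∀ k : ℕ, (μ.map X).real {k} • f k = f k * pois a k := by
      intro k
      rw [measureReal_def, hν k, ENNReal.toReal_ofReal (pois_nonneg ha k), smul_eq_mul, mul_comm]
    rw [tsum_congr hterm, hs.tsum_eq]


/-- If `X` and `Y` are independent random variables with Poisson
distributions of means `a > 0` and `b > 0` respectively, then the variance
`Var[Z] = E[Z²] - (E[Z])²` of `Z = (X - Y)² - X - Y` satisfies
`Var[Z] ≤ 4(a-b)²(a+b) + 8(a+b)²`. -/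
theorem poisson_estimator_variance
    {Ω : Type*} [MeasurableSpace Ω] (μ : Measure Ω) [IsProbabilityMeasure μ]
    (X Y : Ω → ℕ) (hX : Measurable X) (hY : Measurable Y)
    (hind : IndepFun X Y μ)
    (a b : ℝ) (ha : 0 < a) (hb : 0 < b)
    (hXd : ∀ k : ℕ, μ {ω | X ω = k}
        = ENNReal.ofReal (Real.exp (-a) * a ^ k / (Nat.factorial k)))
    (hYd : ∀ k : ℕ, μ {ω | Y ω = k}
        = ENNReal.ofReal (Real.exp (-b) * b ^ k / (Nat.factorial k))) :
    (∫ ω, ((((X ω : ℝ) - (Y ω : ℝ)) ^ 2 - (X ω : ℝ) - (Y ω : ℝ))) ^ 2 ∂μ)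
      - (∫ ω, (((X ω : ℝ) - (Y ω : ℝ)) ^ 2 - (X ω : ℝ) - (Y ω : ℝ)) ∂μ) ^ 2
      ≤ 4 * (a - b) ^ 2 * (a + b) + 8 * (a + b) ^ 2 := by
  have hXd' : ∀ k : ℕ, μ {ω | X ω = k} = ENNReal.ofReal (pois a k) := by
    intro k; rw [pois_def]; exact hXd k
  have hYd' : ∀ k : ℕ, μ {ω | Y ω = k} = ENNReal.ofReal (pois b k) := by
    intro k; rw [pois_def]; exact hYd k
  have hmX : ∀ m : ℕ, m ≤ 4 → Integrable (fun ω => ((X ω : ℝ)) ^ m) μ ∧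
      ∫ ω, ((X ω : ℝ)) ^ m ∂μ = pmom a m := fun m hm =>
    integral_comp_pois μ X hX a ha.le hXd' (fun k => (k : ℝ) ^ m)
      (fun k => by positivity) _ (hasSum_pow_pois a m hm)
  have hmY : ∀ m : ℕ, m ≤ 4 → Integrable (fun ω => ((Y ω : ℝ)) ^ m) μ ∧
      ∫ ω, ((Y ω : ℝ)) ^ m ∂μ = pmom b m := fun m hm =>
    integral_comp_pois μ Y hY b hb.le hYd' (fun k => (k : ℝ) ^ m)
      (fun k => by positivity) _ (hasSum_pow_pois b m hm)
  have hprod : ∀ i j : ℕ, i ≤ 4 → j ≤ 4 →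
      Integrable (fun ω => (X ω : ℝ) ^ i * (Y ω : ℝ) ^ j) μ ∧
      ∫ ω, (X ω : ℝ) ^ i * (Y ω : ℝ) ^ j ∂μ = pmom a i * pmom b j := by
    intro i j hi hj
    have hXi := hmX i hi; have hYj := hmY j hj
    have hindij : IndepFun (fun ω => (X ω : ℝ) ^ i) (fun ω => (Y ω : ℝ) ^ j) μ :=
      hind.comp (measurable_of_countable (fun n : ℕ => (n : ℝ) ^ i))
        (measurable_of_countable (fun n : ℕ => (n : ℝ) ^ j))
    refine ⟨hindij.integrable_mul hXi.1 hYj.1, ?_⟩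
    calc ∫ ω, (X ω : ℝ) ^ i * (Y ω : ℝ) ^ j ∂μ
        = (∫ ω, (X ω : ℝ) ^ i ∂μ) * ∫ ω, (Y ω : ℝ) ^ j ∂μ :=
          hindij.integral_fun_mul_eq_mul_integral hXi.1.1 hYj.1.1
      _ = pmom a i * pmom b j := by rw [hXi.2, hYj.2]
  have I40 := (hprod 4 0 (by norm_num) (by norm_num)).1
  have I04 := (hprod 0 4 (by norm_num) (by norm_num)).1
  have I22 := (hprod 2 2 (by norm_num) (by norm_num)).1
  have I31 := (hprod 3 1 (by norm_num) (by norm_num)).1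
  have I13 := (hprod 1 3 (by norm_num) (by norm_num)).1
  have I30 := (hprod 3 0 (by norm_num) (by norm_num)).1
  have I03 := (hprod 0 3 (by norm_num) (by norm_num)).1
  have I21 := (hprod 2 1 (by norm_num) (by norm_num)).1
  have I12 := (hprod 1 2 (by norm_num) (by norm_num)).1
  have I20 := (hprod 2 0 (by norm_num) (by norm_num)).1
  have I02 := (hprod 0 2 (by norm_num) (by norm_num)).1
  have I11 := (hprod 1 1 (by norm_num) (by norm_num)).1
  have I10 := (hprod 1 0 (by norm_num) (by norm_num)).1
  have I01 := (hprod 0 1 (by norm_num) (by norm_num)).1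
  have E40 := (hprod 4 0 (by norm_num) (by norm_num)).2
  have E04 := (hprod 0 4 (by norm_num) (by norm_num)).2
  have E22 := (hprod 2 2 (by norm_num) (by norm_num)).2
  have E31 := (hprod 3 1 (by norm_num) (by norm_num)).2
  have E13 := (hprod 1 3 (by norm_num) (by norm_num)).2
  have E30 := (hprod 3 0 (by norm_num) (by norm_num)).2
  have E03 := (hprod 0 3 (by norm_num) (by norm_num)).2
  have E21 := (hprod 2 1 (by norm_num) (by norm_num)).2
  have E12 := (hprod 1 2 (by norm_num) (by norm_num)).2
  have E20 := (hprod 2 0 (by norm_num) (by norm_num)).2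
  have E02 := (hprod 0 2 (by norm_num) (by norm_num)).2
  have E11 := (hprod 1 1 (by norm_num) (by norm_num)).2
  have E10 := (hprod 1 0 (by norm_num) (by norm_num)).2
  have E01 := (hprod 0 1 (by norm_num) (by norm_num)).2
  have hZ1 : (∫ ω, (((X ω : ℝ) - (Y ω : ℝ)) ^ 2 - (X ω : ℝ) - (Y ω : ℝ)) ∂μ)
      = pmom a 2 * pmom b 0 - 2 * (pmom a 1 * pmom b 1) + pmom a 0 * pmom b 2 - pmom a 1 * pmom b 0 - pmom a 0 * pmom b 1 := by
    have hfun : (fun ω => (((X ω : ℝ) - (Y ω : ℝ)) ^ 2 - (X ω : ℝ) - (Y ω : ℝ)))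
        = fun ω => (X ω : ℝ) ^ 2 * (Y ω : ℝ) ^ 0 - 2 * ((X ω : ℝ) ^ 1 * (Y ω : ℝ) ^ 1) + (X ω : ℝ) ^ 0 * (Y ω : ℝ) ^ 2 - (X ω : ℝ) ^ 1 * (Y ω : ℝ) ^ 0 - (X ω : ℝ) ^ 0 * (Y ω : ℝ) ^ 1 := by
      funext ω; ring
    rw [hfun]
    have J2_11 : Integrable (fun ω => 2 * ((X ω : ℝ) ^ 1 * (Y ω : ℝ) ^ 1)) μ := I11.const_mul 2
    have B11 : Integrable (fun ω => (X ω : ℝ) ^ 2 * (Y ω : ℝ) ^ 0 - 2 * ((X ω : ℝ) ^ 1 * (Y ω : ℝ) ^ 1)) μ := I20.sub J2_11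
    have B12 : Integrable (fun ω => (X ω : ℝ) ^ 2 * (Y ω : ℝ) ^ 0 - 2 * ((X ω : ℝ) ^ 1 * (Y ω : ℝ) ^ 1) + (X ω : ℝ) ^ 0 * (Y ω : ℝ) ^ 2) μ := B11.add I02
    have B13 : Integrable (fun ω => (X ω : ℝ) ^ 2 * (Y ω : ℝ) ^ 0 - 2 * ((X ω : ℝ) ^ 1 * (Y ω : ℝ) ^ 1) + (X ω : ℝ) ^ 0 * (Y ω : ℝ) ^ 2 - (X ω : ℝ) ^ 1 * (Y ω : ℝ) ^ 0) μ := B12.sub I10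
    have B14 : Integrable (fun ω => (X ω : ℝ) ^ 2 * (Y ω : ℝ) ^ 0 - 2 * ((X ω : ℝ) ^ 1 * (Y ω : ℝ) ^ 1) + (X ω : ℝ) ^ 0 * (Y ω : ℝ) ^ 2 - (X ω : ℝ) ^ 1 * (Y ω : ℝ) ^ 0 - (X ω : ℝ) ^ 0 * (Y ω : ℝ) ^ 1) μ := B13.sub I01
    rw [integral_sub B13 I01,
      integral_sub B12 I10,
      integral_add B11 I02,
      integral_sub I20 J2_11]
    simp only [integral_const_mul]
    rw [E01, E02, E10, E11, E20]
  have hZ2 : (∫ ω, ((((X ω : ℝ) - (Y ω : ℝ)) ^ 2 - (X ω : ℝ) - (Y ω : ℝ))) ^ 2 ∂μ)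
      = pmom a 4 * pmom b 0 + pmom a 0 * pmom b 4 + 6 * (pmom a 2 * pmom b 2) - 4 * (pmom a 3 * pmom b 1) - 4 * (pmom a 1 * pmom b 3) - 2 * (pmom a 3 * pmom b 0) - 2 * (pmom a 0 * pmom b 3) + 2 * (pmom a 2 * pmom b 1) + 2 * (pmom a 1 * pmom b 2) + pmom a 2 * pmom b 0 + pmom a 0 * pmom b 2 + 2 * (pmom a 1 * pmom b 1) := by
    have hfun : (fun ω => ((((X ω : ℝ) - (Y ω : ℝ)) ^ 2 - (X ω : ℝ) - (Y ω : ℝ))) ^ 2)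
        = fun ω => (X ω : ℝ) ^ 4 * (Y ω : ℝ) ^ 0 + (X ω : ℝ) ^ 0 * (Y ω : ℝ) ^ 4 + 6 * ((X ω : ℝ) ^ 2 * (Y ω : ℝ) ^ 2) - 4 * ((X ω : ℝ) ^ 3 * (Y ω : ℝ) ^ 1) - 4 * ((X ω : ℝ) ^ 1 * (Y ω : ℝ) ^ 3) - 2 * ((X ω : ℝ) ^ 3 * (Y ω : ℝ) ^ 0) - 2 * ((X ω : ℝ) ^ 0 * (Y ω : ℝ) ^ 3) + 2 * ((X ω : ℝ) ^ 2 * (Y ω : ℝ) ^ 1) + 2 * ((X ω : ℝ) ^ 1 * (Y ω : ℝ) ^ 2) + (X ω : ℝ) ^ 2 * (Y ω : ℝ) ^ 0 + (X ω : ℝ) ^ 0 * (Y ω : ℝ) ^ 2 + 2 * ((X ω : ℝ) ^ 1 * (Y ω : ℝ) ^ 1) := by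
      funext ω; ring
    rw [hfun]
    have J6_22 : Integrable (fun ω => 6 * ((X ω : ℝ) ^ 2 * (Y ω : ℝ) ^ 2)) μ := I22.const_mul 6
    have J4_31 : Integrable (fun ω => 4 * ((X ω : ℝ) ^ 3 * (Y ω : ℝ) ^ 1)) μ := I31.const_mul 4
    have J4_13 : Integrable (fun ω => 4 * ((X ω : ℝ) ^ 1 * (Y ω : ℝ) ^ 3)) μ := I13.const_mul 4
    have J2_30 : Integrable (fun ω => 2 * ((X ω : ℝ) ^ 3 * (Y ω : ℝ) ^ 0)) μ := I30.const_mul 2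
    have J2_03 : Integrable (fun ω => 2 * ((X ω : ℝ) ^ 0 * (Y ω : ℝ) ^ 3)) μ := I03.const_mul 2
    have J2_21 : Integrable (fun ω => 2 * ((X ω : ℝ) ^ 2 * (Y ω : ℝ) ^ 1)) μ := I21.const_mul 2
    have J2_12 : Integrable (fun ω => 2 * ((X ω : ℝ) ^ 1 * (Y ω : ℝ) ^ 2)) μ := I12.const_mul 2
    have J2_11 : Integrable (fun ω => 2 * ((X ω : ℝ) ^ 1 * (Y ω : ℝ) ^ 1)) μ := I11.const_mul 2
    have B21 : Integrable (fun ω => (X ω : ℝ) ^ 4 * (Y ω : ℝ) ^ 0 + (X ω : ℝ) ^ 0 * (Y ω : ℝ) ^ 4) μ := I40.add I04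
    have B22 : Integrable (fun ω => (X ω : ℝ) ^ 4 * (Y ω : ℝ) ^ 0 + (X ω : ℝ) ^ 0 * (Y ω : ℝ) ^ 4 + 6 * ((X ω : ℝ) ^ 2 * (Y ω : ℝ) ^ 2)) μ := B21.add J6_22
    have B23 : Integrable (fun ω => (X ω : ℝ) ^ 4 * (Y ω : ℝ) ^ 0 + (X ω : ℝ) ^ 0 * (Y ω : ℝ) ^ 4 + 6 * ((X ω : ℝ) ^ 2 * (Y ω : ℝ) ^ 2) - 4 * ((X ω : ℝ) ^ 3 * (Y ω : ℝ) ^ 1)) μ := B22.sub J4_31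
    have B24 : Integrable (fun ω => (X ω : ℝ) ^ 4 * (Y ω : ℝ) ^ 0 + (X ω : ℝ) ^ 0 * (Y ω : ℝ) ^ 4 + 6 * ((X ω : ℝ) ^ 2 * (Y ω : ℝ) ^ 2) - 4 * ((X ω : ℝ) ^ 3 * (Y ω : ℝ) ^ 1) - 4 * ((X ω : ℝ) ^ 1 * (Y ω : ℝ) ^ 3)) μ := B23.sub J4_13
    have B25 : Integrable (fun ω => (X ω : ℝ) ^ 4 * (Y ω : ℝ) ^ 0 + (X ω : ℝ) ^ 0 * (Y ω : ℝ) ^ 4 + 6 * ((X ω : ℝ) ^ 2 * (Y ω : ℝ) ^ 2) - 4 * ((X ω : ℝ) ^ 3 * (Y ω : ℝ) ^ 1) - 4 * ((X ω : ℝ) ^ 1 * (Y ω : ℝ) ^ 3) - 2 * ((X ω : ℝ) ^ 3 * (Y ω : ℝ) ^ 0)) μ := B24.sub J2_30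
    have B26 : Integrable (fun ω => (X ω : ℝ) ^ 4 * (Y ω : ℝ) ^ 0 + (X ω : ℝ) ^ 0 * (Y ω : ℝ) ^ 4 + 6 * ((X ω : ℝ) ^ 2 * (Y ω : ℝ) ^ 2) - 4 * ((X ω : ℝ) ^ 3 * (Y ω : ℝ) ^ 1) - 4 * ((X ω : ℝ) ^ 1 * (Y ω : ℝ) ^ 3) - 2 * ((X ω : ℝ) ^ 3 * (Y ω : ℝ) ^ 0) - 2 * ((X ω : ℝ) ^ 0 * (Y ω : ℝ) ^ 3)) μ := B25.sub J2_03
    have B27 : Integrable (fun ω => (X ω : ℝ) ^ 4 * (Y ω : ℝ) ^ 0 + (X ω : ℝ) ^ 0 * (Y ω : ℝ) ^ 4 + 6 * ((X ω : ℝ) ^ 2 * (Y ω : ℝ) ^ 2) - 4 * ((X ω : ℝ) ^ 3 * (Y ω : ℝ) ^ 1) - 4 * ((X ω : ℝ) ^ 1 * (Y ω : ℝ) ^ 3) - 2 * ((X ω : ℝ) ^ 3 * (Y ω : ℝ) ^ 0) - 2 * ((X ω : ℝ) ^ 0 * (Y ω : ℝ) ^ 3) + 2 * ((X ω : ℝ)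 ^ 2 * (Y ω : ℝ) ^ 1)) μ := B26.add J2_21
    have B28 : Integrable (fun ω => (X ω : ℝ) ^ 4 * (Y ω : ℝ) ^ 0 + (X ω : ℝ) ^ 0 * (Y ω : ℝ) ^ 4 + 6 * ((X ω : ℝ) ^ 2 * (Y ω : ℝ) ^ 2) - 4 * ((X ω : ℝ) ^ 3 * (Y ω : ℝ) ^ 1) - 4 * ((X ω : ℝ) ^ 1 * (Y ω : ℝ) ^ 3) - 2 * ((X ω : ℝ) ^ 3 * (Y ω : ℝ) ^ 0) - 2 * ((X ω : ℝ) ^ 0 * (Y ω : ℝ) ^ 3) + 2 * ((X ω : ℝ) ^ 2 * (Y ω : ℝ) ^ 1) + 2 * ((X ω : ℝ) ^ 1 * (Y ω : ℝ) ^ 2)) μ := B27.add J2_12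
    have B29 : Integrable (fun ω => (X ω : ℝ) ^ 4 * (Y ω : ℝ) ^ 0 + (X ω : ℝ) ^ 0 * (Y ω : ℝ) ^ 4 + 6 * ((X ω : ℝ) ^ 2 * (Y ω : ℝ) ^ 2) - 4 * ((X ω : ℝ) ^ 3 * (Y ω : ℝ) ^ 1) - 4 * ((X ω : ℝ) ^ 1 * (Y ω : ℝ) ^ 3) - 2 * ((X ω : ℝ) ^ 3 * (Y ω : ℝ) ^ 0) - 2 * ((X ω : ℝ) ^ 0 * (Y ω : ℝ) ^ 3) + 2 * ((X ω : ℝ) ^ 2 * (Y ω : ℝ) ^ 1) + 2 * ((X ω : ℝ) ^ 1 * (Y ω : ℝ) ^ 2) + (X ω : ℝ) ^ 2 * (Y ω : ℝ) ^ 0) μ := B28.add I20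
    have B210 : Integrable (fun ω => (X ω : ℝ) ^ 4 * (Y ω : ℝ) ^ 0 + (X ω : ℝ) ^ 0 * (Y ω : ℝ) ^ 4 + 6 * ((X ω : ℝ) ^ 2 * (Y ω : ℝ) ^ 2) - 4 * ((X ω : ℝ) ^ 3 * (Y ω : ℝ) ^ 1) - 4 * ((X ω : ℝ) ^ 1 * (Y ω : ℝ) ^ 3) - 2 * ((X ω : ℝ) ^ 3 * (Y ω : ℝ) ^ 0) - 2 * ((X ω : ℝ) ^ 0 * (Y ω : ℝ) ^ 3) + 2 * ((X ω : ℝ) ^ 2 * (Y ω : ℝ) ^ 1) + 2 * ((X ω : ℝ) ^ 1 * (Y ω : ℝ) ^ 2) + (X ω : ℝ) ^ 2 * (Y ω : ℝ) ^ 0 + (X ω : ℝ) ^ 0 * (Y ω : ℝ) ^ 2) μ := B29.add I02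
    have B211 : Integrable (fun ω => (X ω : ℝ) ^ 4 * (Y ω : ℝ) ^ 0 + (X ω : ℝ) ^ 0 * (Y ω : ℝ) ^ 4 + 6 * ((X ω : ℝ) ^ 2 * (Y ω : ℝ) ^ 2) - 4 * ((X ω : ℝ) ^ 3 * (Y ω : ℝ) ^ 1) - 4 * ((X ω : ℝ) ^ 1 * (Y ω : ℝ) ^ 3) - 2 * ((X ω : ℝ) ^ 3 * (Y ω : ℝ) ^ 0) - 2 * ((X ω : ℝ) ^ 0 * (Y ω : ℝ) ^ 3) + 2 * ((X ω : ℝ) ^ 2 * (Y ω : ℝ) ^ 1) + 2 * ((X ω : ℝ) ^ 1 * (Y ω : ℝ) ^ 2) + (X ω : ℝ) ^ 2 * (Y ω : ℝ) ^ 0 + (X ω : ℝ) ^ 0 * (Y ω : ℝ) ^ 2 + 2 * ((X ω : ℝ) ^ 1 * (Y ω : ℝ) ^ 1)) μ := B210.add J2_11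
    rw [integral_add B210 J2_11,
      integral_add B29 I02,
      integral_add B28 I20,
      integral_add B27 J2_12,
      integral_add B26 J2_21,
      integral_sub B25 J2_03,
      integral_sub B24 J2_30,
      integral_sub B23 J4_13,
      integral_sub B22 J4_31,
      integral_add B21 J6_22,
      integral_add I40 I04]
    simp only [integral_const_mul]
    rw [E02, E03, E04, E11, E12, E13, E20, E21, E22, E30, E31, E40]
  rw [hZ1, hZ2]
  simp only [pmom]
  nlinarith [sq_nonneg (a + b), sq_nonneg (a - b), mul_pos ha hb, ha.le, hb.le]
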